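/- Let I be a nonempty finite set, and let (x_i)_{i∈I} and (y_i)_{i∈I} be {0,1}-valued random variables on a common probability space such that almost surely y_i ≤ x_i for all i ∈ I. Set X = ∑_{i∈I} x_i and Y = ∑_{i∈I} y_i. Suppose there is a constant a ∈ (0,1] such that for every i ∈ I and every J ⊆ I∖{i}: 𝐏[ y_i = 1 and y_j = 0 for all j ∈ J ] ≥ a · 𝐏[ x_i = 1 and y_j = 0 for all j ∈ J ]. Then 𝐏[ Y = 0 and X > 0 ] ≤ (1/a) · 𝐄[ exp(−a·X/e) · 1_{X > 0} ], where e is Euler's number. Equivalently, if 𝐏[X>0] > 0 then 𝐏[Y = 0 | X > 0] ≤ (1/a)·𝐄[exp(−a·X/e) | X > 0]. -/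

import Mathlib

open MeasureTheory Finset
open scoped BigOperators

private lemma av_le_exp (a v : ℝ) (ha0 : 0 < a) (ha1 : a ≤ 1) : a * v ≤ Real.exp v := by
  rcases le_or_gt v 0 with h | h
  · exact (mul_nonpos_of_nonneg_of_nonpos ha0.le h).trans (Real.exp_pos v).le
  · nlinarith [Real.add_one_le_exp v]

private lemma key_numeric (a K u : ℝ) (ha0 : 0 < a) (ha1 : a ≤ 1) :
    (K - u) * Real.exp (-K) ≤ (1 / a) * Real.exp (-u) := by
  have h1 := av_le_exp a (K - u) ha0 ha1
  have h2 : Real.exp (K - u) * Real.exp (-K) = Real.exp (-u) := by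
    rw [← Real.exp_add]; ring_nf
  have h3 : a * (K - u) * Real.exp (-K) ≤ Real.exp (-u) := by
    calc a * (K - u) * Real.exp (-K) ≤ Real.exp (K - u) * Real.exp (-K) :=
          mul_le_mul_of_nonneg_right h1 (Real.exp_pos _).le
      _ = Real.exp (-u) := h2
  rw [one_div, inv_mul_eq_div, le_div_iff₀ ha0]
  nlinarith [h3]

/-- **Lemma (large deviation bound, [GPS Proposition 6.1]).**
Let `I` be a nonempty finite set and let `(x_i)`, `(y_i)` be `{0,1}`-valued random
variables (encoded as `Bool`-valued, `true` = `1`) with `y_i ≤ x_i` almost surely.  Set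
`X = ∑ x_i` and `Y = ∑ y_i`.  If there is `a ∈ (0,1]` such that for every `i` and
every `J ⊆ I∖{i}` one has
`𝐏[y_i = 1, y_j = 0 ∀j∈J] ≥ a·𝐏[x_i = 1, y_j = 0 ∀j∈J]`, then
`𝐏[Y = 0, X > 0] ≤ (1/a)·𝐄[exp(-a·X/e)·1_{X>0}]`. -/
theorem large_deviation_bound {I : Type*} [Fintype I] [Nonempty I]
    {Ω : Type*} [MeasurableSpace Ω] (μ : Measure Ω) [IsProbabilityMeasure μ]
    (x y : I → Ω → Bool)
    (hmx : ∀ i, Measurable (x i)) (hmy : ∀ i, Measurable (y i))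
    (hyx : ∀ᵐ ω ∂μ, ∀ i, y i ω = true → x i ω = true)
    (a : ℝ) (ha0 : 0 < a) (ha1 : a ≤ 1)
    (hcorr : ∀ (i : I) (J : Finset I), i ∉ J →
      ENNReal.ofReal a * μ {ω | x i ω = true ∧ ∀ j ∈ J, y j ω = false}
        ≤ μ {ω | y i ω = true ∧ ∀ j ∈ J, y j ω = false}) :
    (μ {ω | (∀ i, y i ω = false) ∧ ∃ i, x i ω = true}).toReal
      ≤ (1 / a) * ∫ ω, (if ∃ i, x i ω = true then
            Real.exp (-(a * (∑ i, if x i ω = true then (1 : ℝ) else 0) / Real.exp 1))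
          else 0) ∂μ := by
  classical
  set s : ℝ := Real.exp (-1) with hs_def
  have hs0 : 0 < s := Real.exp_pos _
  have hs1 : s ≤ 1 := by
    rw [hs_def, show (1:ℝ) = Real.exp 0 from Real.exp_zero.symm]
    exact Real.exp_le_exp.mpr (by norm_num)
  set fX : Ω → ℝ := fun ω => ∑ i, if x i ω = true then (1:ℝ) else 0 with hfX_def
  set q : Ω → ℝ := fun ω => ∏ j, if y j ω = true then s else 1 with hq_def
  set qE : I → Ω → ℝ := fun i ω => ∏ j ∈ univ.erase i, if y j ω = true then s else 1
    with hqE_def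
  set R : Ω → ℝ := fun ω => ∑ i, if y i ω = true then qE i ω else 0 with hR_def
  set tgt : Ω → ℝ := fun ω => if ∃ i, x i ω = true then
      Real.exp (-(a * (∑ i, if x i ω = true then (1 : ℝ) else 0) / Real.exp 1))
    else 0 with htgt_def
  -- measurable sets
  have hsetx : ∀ i, MeasurableSet {ω | x i ω = true} :=
    fun i => hmx i (measurableSet_singleton true)
  have hsety' : ∀ i, MeasurableSet {ω | y i ω = false} :=
    fun i => hmy i (measurableSet_singleton false)
  -- basic bounds on factors
  have hfac0 : ∀ j ω, 0 ≤ (if y j ω = true then s else 1) := by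
    intro j ω; split
    · exact hs0.le
    · norm_num
  have hfac1 : ∀ j ω, (if y j ω = true then s else 1) ≤ 1 := by
    intro j ω; split
    · exact hs1
    · exact le_rfl
  -- measurability
  have hmq : Measurable q := by
    rw [hq_def]
    exact Finset.measurable_prod _ fun j _ =>
      Measurable.ite (hmy j (measurableSet_singleton true)) measurable_const measurable_const
  have hmqE : ∀ i, Measurable (qE i) := by
    intro i
    have : qE i = fun ω => ∏ j ∈ univ.erase i, if y j ω = true then s else 1 := rfl
    rw [this]
    exact Finset.measurable_prod _ fun j _ =>
      Measurable.ite (hmy j (measurableSet_singleton true)) measurable_const measurable_const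
  have hmfX : Measurable fX := by
    rw [hfX_def]
    exact Finset.measurable_sum _ fun i _ =>
      Measurable.ite (hsetx i) measurable_const measurable_const
  have hmR : Measurable R := by
    rw [hR_def]
    exact Finset.measurable_sum _ fun i _ =>
      Measurable.ite (hmy i (measurableSet_singleton true)) (hmqE i) measurable_const
  -- bounds
  have hq0 : ∀ ω, 0 ≤ q ω := fun ω => Finset.prod_nonneg fun j _ => hfac0 j ω
  have hq1 : ∀ ω, q ω ≤ 1 := fun ω =>
    Finset.prod_le_one (fun j _ => hfac0 j ω) (fun j _ => hfac1 j ω)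
  have hqE0 : ∀ i ω, 0 ≤ qE i ω := fun i ω => Finset.prod_nonneg fun j _ => hfac0 j ω
  have hqE1 : ∀ i ω, qE i ω ≤ 1 := fun i ω =>
    Finset.prod_le_one (fun j _ => hfac0 j ω) (fun j _ => hfac1 j ω)
  have hfXcard : ∀ ω, fX ω = ((univ.filter fun i => x i ω = true).card : ℝ) := by
    intro ω; rw [hfX_def]; exact Finset.sum_boole _ _
  have hfX0 : ∀ ω, 0 ≤ fX ω := by
    intro ω; rw [hfXcard ω]; positivity
  have hfXtop : ∀ ω, fX ω ≤ (Fintype.card I : ℝ) := by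
    intro ω; rw [hfXcard ω]
    exact_mod_cast Finset.card_le_card (Finset.filter_subset _ _)
  have norm_le : ∀ (u C : ℝ), 0 ≤ u → u ≤ C → ‖u‖ ≤ C := fun u C h1 h2 => by
    rw [Real.norm_eq_abs, abs_of_nonneg h1]; exact h2
  have integrable_bdd : ∀ (f : Ω → ℝ) (C : ℝ), Measurable f → (∀ ω, ‖f ω‖ ≤ C) →
      Integrable f μ := fun f C hf h =>
    (integrable_const C).mono' hf.aestronglyMeasurable (ae_of_all _ h)
  -- indicator integral helpers
  have ind_eq : ∀ (P : Ω → Prop) [DecidablePred P],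
      (fun ω => if P ω then (1:ℝ) else 0) = Set.indicator {ω | P ω} (fun _ => (1:ℝ)) := by
    intro P _
    funext ω
    by_cases h : P ω <;> simp [h, Set.indicator_apply, Set.mem_setOf_eq]
  have int_ind : ∀ (P : Ω → Prop) [DecidablePred P], MeasurableSet {ω | P ω} →
      (∫ ω, (if P ω then (1:ℝ) else 0) ∂μ) = (μ {ω | P ω}).toReal := by
    intro P _ hP
    rw [ind_eq P, integral_indicator_const (1:ℝ) hP, smul_eq_mul, mul_one, measureReal_def]
  have integrable_ind : ∀ (P : Ω → Prop) [DecidablePred P], MeasurableSet {ω | P ω} →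
      Integrable (fun ω => if P ω then (1:ℝ) else 0) μ := by
    intro P _ hP
    rw [ind_eq P]
    exact (integrable_const (1:ℝ)).indicator hP
  -- measurability of the correlation sets
  have hmeasJ : ∀ (b : Ω → Bool), Measurable b → ∀ (J : Finset I),
      MeasurableSet {ω | b ω = true ∧ ∀ j ∈ J, y j ω = false} := by
    intro b hb J
    have h1 : MeasurableSet {ω | b ω = true} := hb (measurableSet_singleton true)
    have h2 : MeasurableSet {ω | ∀ j ∈ J, y j ω = false} := by
      have he : {ω | ∀ j ∈ J, y j ω = false} = ⋂ j ∈ (J : Set I), {ω | y j ω = false} := by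
        ext ω; simp
      rw [he]
      exact MeasurableSet.biInter J.countable_toSet (fun j _ => hsety' j)
    exact h1.inter h2
  -- expansion lemma
  have hexp : ∀ (i : I) (b : Ω → Bool), Measurable b →
      ∫ ω, (if b ω = true then qE i ω else 0) ∂μ
        = ∑ J ∈ (univ.erase i).powerset,
            ((1 - s) ^ J.card * s ^ ((univ.erase i : Finset I).card - J.card))
              * (μ {ω | b ω = true ∧ ∀ j ∈ J, y j ω = false}).toReal := by
    intro i b hb
    have hpt : ∀ ω, (if b ω = true then qE i ω else 0)
        = ∑ J ∈ (univ.erase i).powerset,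
            ((1 - s) ^ J.card * s ^ ((univ.erase i : Finset I).card - J.card))
              * (if (b ω = true ∧ ∀ j ∈ J, y j ω = false) then (1:ℝ) else 0) := by
      intro ω
      have hq' : qE i ω = ∑ J ∈ (univ.erase i).powerset,
          ((1 - s) ^ J.card * s ^ ((univ.erase i : Finset I).card - J.card))
            * (if (∀ j ∈ J, y j ω = false) then (1:ℝ) else 0) := by
        have h0 : qE i ω = ∏ j ∈ univ.erase i,
            ((1 - s) * (if y j ω = false then (1:ℝ) else 0) + s) := by
          rw [hqE_def]
          refine Finset.prod_congr rfl fun j _ => ?_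
          cases hyj : y j ω <;> simp [hyj] <;> ring
        rw [h0, Finset.prod_add]
        refine Finset.sum_congr rfl fun J hJ => ?_
        rw [Finset.prod_mul_distrib, Finset.prod_const, Finset.prod_const, Finset.prod_boole,
          Finset.card_sdiff_of_subset (Finset.mem_powerset.mp hJ)]
        ring
      by_cases hbω : b ω = true
      · rw [if_pos hbω, hq']
        refine Finset.sum_congr rfl fun J hJ => ?_
        simp [hbω]
      · rw [if_neg hbω]
        symm
        refine Finset.sum_eq_zero fun J hJ => ?_
        rw [if_neg (by tauto), mul_zero]
    calc ∫ ω, (if b ω = true then qE i ω else 0) ∂μ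
        = ∫ ω, ∑ J ∈ (univ.erase i).powerset,
            ((1 - s) ^ J.card * s ^ ((univ.erase i : Finset I).card - J.card))
              * (if (b ω = true ∧ ∀ j ∈ J, y j ω = false) then (1:ℝ) else 0) ∂μ := by
          simp only [hpt]
      _ = ∑ J ∈ (univ.erase i).powerset,
            ((1 - s) ^ J.card * s ^ ((univ.erase i : Finset I).card - J.card))
              * (μ {ω | b ω = true ∧ ∀ j ∈ J, y j ω = false}).toReal := by
          rw [integral_finset_sum _ (fun J _ =>
            ((integrable_ind _ (hmeasJ b hb J)).const_mul _))]
          refine Finset.sum_congr rfl fun J _ => ?_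
          rw [integral_const_mul, int_ind _ (hmeasJ b hb J)]
  -- per-index inequality
  have step_i : ∀ i : I,
      a * ∫ ω, (if x i ω = true then qE i ω else 0) ∂μ
        ≤ ∫ ω, (if y i ω = true then qE i ω else 0) ∂μ := by
    intro i
    rw [hexp i (x i) (hmx i), hexp i (y i) (hmy i), Finset.mul_sum]
    refine Finset.sum_le_sum fun J hJ => ?_
    have hiJ : i ∉ J := fun h => (Finset.mem_erase.mp (Finset.mem_powerset.mp hJ h)).1 rfl
    have hc : 0 ≤ (1 - s) ^ J.card * s ^ ((univ.erase i : Finset I).card - J.card) :=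
      mul_nonneg (pow_nonneg (by linarith) _) (pow_nonneg hs0.le _)
    have h2 : a * (μ {ω | x i ω = true ∧ ∀ j ∈ J, y j ω = false}).toReal
        ≤ (μ {ω | y i ω = true ∧ ∀ j ∈ J, y j ω = false}).toReal := by
      have h3 := ENNReal.toReal_mono (measure_ne_top μ _) (hcorr i J hiJ)
      rwa [ENNReal.toReal_mul, ENNReal.toReal_ofReal ha0.le] at h3
    rw [mul_left_comm]
    exact mul_le_mul_of_nonneg_left h2 hc
  -- integrability of main functions
  have hIfq : Integrable (fun ω => fX ω * q ω) μ := by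
    refine integrable_bdd _ (Fintype.card I) (hmfX.mul hmq) fun ω => ?_
    refine norm_le _ _ (mul_nonneg (hfX0 ω) (hq0 ω)) ?_
    calc fX ω * q ω ≤ fX ω * 1 := mul_le_mul_of_nonneg_left (hq1 ω) (hfX0 ω)
      _ = fX ω := mul_one _
      _ ≤ _ := hfXtop ω
  have hIR : Integrable R μ := by
    refine integrable_bdd _ (Fintype.card I) hmR fun ω => ?_
    have h0 : 0 ≤ R ω := by
      rw [hR_def]
      refine Finset.sum_nonneg fun i _ => ?_
      split
      · exact hqE0 i ω
      · exact le_rfl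
    refine norm_le _ _ h0 ?_
    rw [hR_def]
    calc (∑ i, if y i ω = true then qE i ω else 0) ≤ ∑ _i : I, (1:ℝ) := by
          refine Finset.sum_le_sum fun i _ => ?_
          split
          · exact hqE1 i ω
          · norm_num
      _ = (Fintype.card I : ℝ) := by simp
  have hItgt : Integrable tgt μ := by
    have hmtgt : Measurable tgt := by
      rw [htgt_def]
      have hExSet : MeasurableSet {ω | ∃ i, x i ω = true} := by
        have h2 : {ω | ∃ i, x i ω = true} = ⋃ i, {ω | x i ω = true} := by ext ω; simp
        rw [h2]; exact MeasurableSet.iUnion fun i => hsetx i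
      exact Measurable.ite hExSet
        ((((Finset.measurable_sum _ fun i _ =>
          Measurable.ite (hsetx i) measurable_const measurable_const).const_mul
            a).div_const _).neg.exp) measurable_const
    refine integrable_bdd _ 1 hmtgt fun ω => ?_
    simp only [htgt_def]
    have h0 : (0:ℝ) ≤ if ∃ i, x i ω = true then
        Real.exp (-(a * (∑ i, if x i ω = true then (1 : ℝ) else 0) / Real.exp 1)) else 0 := by
      split
      · exact (Real.exp_pos _).le
      · exact le_rfl
    refine norm_le _ _ h0 ?_
    split
    · have hnn : 0 ≤ a * (∑ i, if x i ω = true then (1 : ℝ) else 0) / Real.exp 1 :=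
        div_nonneg (mul_nonneg ha0.le (hfX0 ω)) (Real.exp_pos _).le
      calc Real.exp (-(a * (∑ i, if x i ω = true then (1 : ℝ) else 0) / Real.exp 1))
          ≤ Real.exp 0 := Real.exp_le_exp.mpr (by linarith)
        _ = 1 := Real.exp_zero
    · norm_num
  -- Lemma B : a * ∫ fX·q ≤ ∫ R
  have lemB : a * ∫ ω, fX ω * q ω ∂μ ≤ ∫ ω, R ω ∂μ := by
    have hIxq : ∀ i : I, Integrable (fun ω => if x i ω = true then q ω else 0) μ := by
      intro i
      refine integrable_bdd _ 1 (Measurable.ite (hsetx i) hmq measurable_const) fun ω => ?_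
      have h0 : (0:ℝ) ≤ if x i ω = true then q ω else 0 := by
        split
        · exact hq0 ω
        · exact le_rfl
      refine norm_le _ _ h0 ?_
      split
      · exact hq1 ω
      · norm_num
    have hIxqE : ∀ i : I, Integrable (fun ω => if x i ω = true then qE i ω else 0) μ := by
      intro i
      refine integrable_bdd _ 1 (Measurable.ite (hsetx i) (hmqE i) measurable_const) fun ω => ?_
      have h0 : (0:ℝ) ≤ if x i ω = true then qE i ω else 0 := by
        split
        · exact hqE0 i ω
        · exact le_rfl
      refine norm_le _ _ h0 ?_
      split
      · exact hqE1 i ω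
      · norm_num
    have hIyqE : ∀ i : I, Integrable (fun ω => if y i ω = true then qE i ω else 0) μ := by
      intro i
      refine integrable_bdd _ 1
        (Measurable.ite (hmy i (measurableSet_singleton true)) (hmqE i) measurable_const)
        fun ω => ?_
      have h0 : (0:ℝ) ≤ if y i ω = true then qE i ω else 0 := by
        split
        · exact hqE0 i ω
        · exact le_rfl
      refine norm_le _ _ h0 ?_
      split
      · exact hqE1 i ω
      · norm_num
    have h1 : ∀ ω, fX ω * q ω = ∑ i, (if x i ω = true then q ω else 0) := by
      intro ω
      rw [hfX_def]
      simp only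
      rw [Finset.sum_mul]
      refine Finset.sum_congr rfl fun i _ => ?_
      split <;> simp
    have h2 : ∫ ω, fX ω * q ω ∂μ = ∑ i, ∫ ω, (if x i ω = true then q ω else 0) ∂μ := by
      simp only [h1]
      exact integral_finset_sum _ (fun i _ => hIxq i)
    have hq_le_qE : ∀ i ω, q ω ≤ qE i ω := by
      intro i ω
      have hsplit : (if y i ω = true then s else 1) * qE i ω = q ω :=
        Finset.mul_prod_erase univ (fun j => if y j ω = true then s else 1) (mem_univ i)
      calc q ω = (if y i ω = true then s else 1) * qE i ω := hsplit.symm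
        _ ≤ 1 * qE i ω := mul_le_mul_of_nonneg_right (hfac1 i ω) (hqE0 i ω)
        _ = qE i ω := one_mul _
    have h3 : ∀ i : I, ∫ ω, (if x i ω = true then q ω else 0) ∂μ
        ≤ ∫ ω, (if x i ω = true then qE i ω else 0) ∂μ := by
      intro i
      refine integral_mono (hIxq i) (hIxqE i) fun ω => ?_
      by_cases h : x i ω = true <;> simp [h]
      exact hq_le_qE i ω
    have h4 : ∫ ω, R ω ∂μ = ∑ i, ∫ ω, (if y i ω = true then qE i ω else 0) ∂μ := by
      rw [hR_def]
      exact integral_finset_sum _ (fun i _ => hIyqE i)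
    calc a * ∫ ω, fX ω * q ω ∂μ
        = a * ∑ i, ∫ ω, (if x i ω = true then q ω else 0) ∂μ := by rw [h2]
      _ ≤ a * ∑ i, ∫ ω, (if x i ω = true then qE i ω else 0) ∂μ :=
          mul_le_mul_of_nonneg_left (Finset.sum_le_sum fun i _ => h3 i) ha0.le
      _ = ∑ i, a * ∫ ω, (if x i ω = true then qE i ω else 0) ∂μ := Finset.mul_sum _ _ _
      _ ≤ ∑ i, ∫ ω, (if y i ω = true then qE i ω else 0) ∂μ :=
          Finset.sum_le_sum fun i _ => step_i i
      _ = ∫ ω, R ω ∂μ := h4.symm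
  -- pointwise inequality
  have htgtfX : ∀ ω, tgt ω = if ∃ i, x i ω = true then
      Real.exp (-(a * fX ω / Real.exp 1)) else 0 := fun ω => rfl
  have hpw : (fun ω => if ((∀ i, y i ω = false) ∧ ∃ i, x i ω = true) then (1:ℝ) else 0)
      ≤ᵐ[μ] fun ω => (1/a) * tgt ω + (s * a) * (fX ω * q ω) - s * R ω := by
    filter_upwards [hyx] with ω hω
    by_cases hy0 : ∀ i, y i ω = false
    · have hq1' : q ω = 1 := by
        rw [hq_def]
        refine Finset.prod_eq_one fun j _ => ?_
        rw [hy0 j]; simp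
      have hR0 : R ω = 0 := by
        rw [hR_def]
        refine Finset.sum_eq_zero fun i _ => ?_
        rw [hy0 i]; simp
      by_cases hx0 : ∃ i, x i ω = true
      · rw [if_pos ⟨hy0, hx0⟩, htgtfX ω, if_pos hx0, hq1', hR0]
        have hkey : s * a * fX ω = a * fX ω / Real.exp 1 := by
          rw [hs_def, Real.exp_neg]
          ring
        have h1a : (1:ℝ) ≤ 1/a := by
          rw [le_div_iff₀ ha0]; linarith
        have hexp1 := Real.add_one_le_exp (-(a * fX ω / Real.exp 1))
        have hexpos := Real.exp_pos (-(a * fX ω / Real.exp 1))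
        have : Real.exp (-(a * fX ω / Real.exp 1))
            ≤ (1/a) * Real.exp (-(a * fX ω / Real.exp 1)) := by nlinarith
        nlinarith [hkey]
      · rw [if_neg (by tauto), htgtfX ω, if_neg hx0, hR0]
        have hfx0 : fX ω = 0 := by
          rw [hfX_def]
          refine Finset.sum_eq_zero fun i _ => ?_
          rw [if_neg (fun h => hx0 ⟨i, h⟩)]
        rw [hfx0]
        ring_nf
        exact le_rfl
    · -- some y is true
      rw [if_neg (by tauto)]
      push_neg at hy0
      obtain ⟨i0, hi0⟩ := hy0
      have hi0' : y i0 ω = true := by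
        cases h : y i0 ω
        · exact absurd h hi0
        · rfl
      have hx0 : ∃ i, x i ω = true := ⟨i0, hω i0 hi0'⟩
      set k := (univ.filter fun i => y i ω = true).card with hk_def
      have hk1 : 1 ≤ k :=
        Finset.card_pos.mpr ⟨i0, Finset.mem_filter.mpr ⟨mem_univ _, hi0'⟩⟩
      obtain ⟨m, hm⟩ : ∃ m, k = m + 1 := ⟨k - 1, (Nat.succ_pred_eq_of_pos hk1).symm⟩
      have hqk : q ω = s ^ k := by
        rw [hq_def]
        simp only
        rw [← Finset.prod_filter_mul_prod_filter_not univ (fun j => y j ω = true)]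
        have hA : ∏ j ∈ univ.filter (fun j => y j ω = true),
            (if y j ω = true then s else 1) = s ^ k := by
          rw [Finset.prod_congr rfl (fun j hj => if_pos (Finset.mem_filter.mp hj).2),
            Finset.prod_const, hk_def]
        have hB : ∏ j ∈ univ.filter (fun j => ¬ y j ω = true),
            (if y j ω = true then s else 1) = 1 := by
          refine Finset.prod_eq_one fun j hj => if_neg (Finset.mem_filter.mp hj).2
        rw [hA, hB, mul_one]
      have hqE' : ∀ i, y i ω = true → qE i ω = s ^ m := by
        intro i hi
        rw [hqE_def]
        simp only
        rw [← Finset.prod_filter_mul_prod_filter_not (univ.erase i) (fun j => y j ω = true)]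
        have hA : ∏ j ∈ (univ.erase i).filter (fun j => y j ω = true),
            (if y j ω = true then s else 1) = s ^ m := by
          rw [Finset.prod_congr rfl (fun j hj => if_pos (Finset.mem_filter.mp hj).2),
            Finset.prod_const]
          congr 1
          have hmemi : i ∈ univ.filter (fun j => y j ω = true) :=
            Finset.mem_filter.mpr ⟨mem_univ _, hi⟩
          rw [Finset.filter_erase, Finset.card_erase_of_mem hmemi]
          have : (univ.filter fun j => y j ω = true).card = k := hk_def.symm
          omega
        have hB : ∏ j ∈ (univ.erase i).filter (fun j => ¬ y j ω = true),
            (if y j ω = true then s else 1) = 1 :=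
          Finset.prod_eq_one fun j hj => if_neg (Finset.mem_filter.mp hj).2
        rw [hA, hB, mul_one]
      have hRk : R ω = (k : ℝ) * s ^ m := by
        rw [hR_def]
        simp only
        rw [← Finset.sum_filter]
        calc ∑ i ∈ univ.filter (fun i => y i ω = true), qE i ω
            = ∑ _i ∈ univ.filter (fun i => y i ω = true), s ^ m :=
              Finset.sum_congr rfl fun i hi => hqE' i (Finset.mem_filter.mp hi).2
          _ = (k:ℝ) * s ^ m := by rw [Finset.sum_const, nsmul_eq_mul, hk_def]
      have hkX : (k:ℝ) ≤ fX ω := by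
        rw [hfXcard ω]
        have hsub : (univ.filter fun i => y i ω = true)
            ⊆ (univ.filter fun i => x i ω = true) := by
          intro j hj
          exact Finset.mem_filter.mpr ⟨mem_univ _, hω j (Finset.mem_filter.mp hj).2⟩
        exact_mod_cast Finset.card_le_card hsub
      -- numeric part
      rw [htgtfX ω, if_pos hx0, hqk, hRk, hm]
      set u := a * fX ω / Real.exp 1 with hu_def
      have hsm : s ^ m = Real.exp (-(m:ℝ)) := by
        rw [hs_def, ← Real.exp_nat_mul]
        congr 1
        ring
      have hsm1 : s ^ (m+1) = Real.exp (-((m:ℝ)+1)) := by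
        rw [hs_def, ← Real.exp_nat_mul]
        congr 1
        push_cast
        ring
      have hus : a * fX ω * s = u := by
        rw [hu_def, hs_def, Real.exp_neg]
        ring
      have hkey := key_numeric a ((m:ℝ)+1) u ha0 ha1
      rw [← hsm1] at hkey
      -- goal: 0 ≤ 1/a * exp(-u) + (s*a)*(fX ω * s^(m+1)) - s * ((m+1 : ℕ):ℝ) * s^m)
      have hs_pow : s * s ^ m = s ^ (m+1) := by ring
      have hexpand : (s * a) * (fX ω * s ^ (m+1)) = u * s ^ (m+1) := by
        rw [← hus]; ring
      have hexpand2 : s * (((m:ℕ)+1 : ℕ):ℝ) * s ^ m = ((m:ℝ)+1) * s ^ (m+1) := by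
        push_cast
        ring
      nlinarith [hkey, hexpand, hexpand2]
  -- final assembly
  have hSmeas : MeasurableSet {ω | (∀ i, y i ω = false) ∧ ∃ i, x i ω = true} := by
    have h1 : MeasurableSet {ω | ∀ i, y i ω = false} := by
      have he : {ω | ∀ i, y i ω = false} = ⋂ i, {ω | y i ω = false} := by ext ω; simp
      rw [he]; exact MeasurableSet.iInter fun i => hsety' i
    have h2 : MeasurableSet {ω | ∃ i, x i ω = true} := by
      have he : {ω | ∃ i, x i ω = true} = ⋃ i, {ω | x i ω = true} := by ext ω; simp
      rw [he]; exact MeasurableSet.iUnion fun i => hsetx i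
    exact h1.inter h2
  have hLHS : (μ {ω | (∀ i, y i ω = false) ∧ ∃ i, x i ω = true}).toReal
      = ∫ ω, (if ((∀ i, y i ω = false) ∧ ∃ i, x i ω = true) then (1:ℝ) else 0) ∂μ :=
    (int_ind _ hSmeas).symm
  have hIRHS : Integrable (fun ω => (1/a) * tgt ω + (s * a) * (fX ω * q ω) - s * R ω) μ :=
    ((hItgt.const_mul _).add (hIfq.const_mul _)).sub (hIR.const_mul _)
  have hmain : ∫ ω, (if ((∀ i, y i ω = false) ∧ ∃ i, x i ω = true) then (1:ℝ) else 0) ∂μ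
      ≤ ∫ ω, ((1/a) * tgt ω + (s * a) * (fX ω * q ω) - s * R ω) ∂μ :=
    integral_mono_ae (integrable_ind _ hSmeas) hIRHS hpw
  have hI2 : Integrable (fun ω => (1/a) * tgt ω) μ := hItgt.const_mul _
  have hI3 : Integrable (fun ω => (s * a) * (fX ω * q ω)) μ := hIfq.const_mul _
  have hI4 : Integrable (fun ω => s * R ω) μ := hIR.const_mul _
  have hI1 : Integrable (fun ω => (1/a) * tgt ω + (s * a) * (fX ω * q ω)) μ := hI2.add hI3
  have hsplit : ∫ ω, ((1/a) * tgt ω + (s * a) * (fX ω * q ω) - s * R ω) ∂μ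
      = (1/a) * (∫ ω, tgt ω ∂μ) + (s * a) * (∫ ω, fX ω * q ω ∂μ) - s * (∫ ω, R ω ∂μ) := by
    rw [integral_sub hI1 hI4, integral_add hI2 hI3,
      integral_const_mul, integral_const_mul, integral_const_mul]
  have hend : (1/a) * (∫ ω, tgt ω ∂μ) + (s * a) * (∫ ω, fX ω * q ω ∂μ) - s * (∫ ω, R ω ∂μ)
      ≤ (1/a) * ∫ ω, tgt ω ∂μ := by
    nlinarith [mul_le_mul_of_nonneg_left lemB hs0.le]
  calc (μ {ω | (∀ i, y i ω = false) ∧ ∃ i, x i ω = true}).toReal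
      = ∫ ω, (if ((∀ i, y i ω = false) ∧ ∃ i, x i ω = true) then (1:ℝ) else 0) ∂μ := hLHS
    _ ≤ ∫ ω, ((1/a) * tgt ω + (s * a) * (fX ω * q ω) - s * R ω) ∂μ := hmain
    _ = (1/a) * (∫ ω, tgt ω ∂μ) + (s * a) * (∫ ω, fX ω * q ω ∂μ) - s * (∫ ω, R ω ∂μ) := hsplit
    _ ≤ (1/a) * ∫ ω, tgt ω ∂μ := hend
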